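/- Let n, a, λ be positive integers with λ ≥ e^e and 1 ≤ a ≤ n. Let X be a random n-bit string with exactly a zeros, and let X̃ be the best of λ independent offspring each generated from X by flipping each bit independently with probability 1/n, where 'best' means maximal number of ones. Then Pr[|X̃|₁ - |X|₁ ≥ ⌈ln λ⌉ | |X̃|₁ > |X|₁] ≤ λ(ne + aλ)a^{ln λ - 1}/(n ln λ)^{ln λ}, where |·|₁ denotes the number of ones. -/

import Mathlib

open MeasureTheory ProbabilityTheory
open scoped ENNReal

/-- The distribution of a single flip indicator: `true` (flip) with probability `1/n`. -/
noncomputable def flipPMF (n : ℕ) (hn : 1 ≤ n) : PMF Bool :=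
  PMF.bernoulli ((n : NNReal))⁻¹ (inv_le_one_of_one_le₀ (by exact_mod_cast hn))

/-- Product measure of `lam` independent standard bit-wise mutations (flip indicators)
on `n`-bit strings, each bit flipped independently with probability `1/n`. -/
noncomputable def mutationsMeasure (n lam : ℕ) (hn : 1 ≤ n) :
    Measure (Fin lam → Fin n → Bool) :=
  Measure.pi (fun _ => Measure.pi (fun _ => (flipPMF n hn).toMeasure))

/-- Number of ones in a bit string. -/
def onesCount {n : ℕ} (x : Fin n → Bool) : ℕ :=
  (Finset.univ.filter (fun i => x i = true)).card

/-- The number of ones of the best (maximal number of ones) of the `lam` offspring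
obtained from `X` by applying the flip indicators `ω`. -/
def bestOnes {n lam : ℕ} (X : Fin n → Bool) (ω : Fin lam → Fin n → Bool) : ℕ :=
  Finset.univ.sup (fun j : Fin lam => onesCount (fun i => xor (ω j i) (X i)))

/-! ### Auxiliary definitions and lemmas -/

open Finset

noncomputable def nuM (n : ℕ) (hn : 1 ≤ n) : Measure Bool := (flipPMF n hn).toMeasure

noncomputable def mu1 (n : ℕ) (hn : 1 ≤ n) : Measure (Fin n → Bool) :=
  Measure.pi fun _ => nuM n hn

section Aux
variable {n : ℕ} (hn : 1 ≤ n)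

lemma nu_true : nuM n hn {true} = (n : ℝ≥0∞)⁻¹ := by
  rw [nuM, PMF.toMeasure_apply_singleton _ _ (measurableSet_singleton _)]
  simp [flipPMF, PMF.bernoulli]
  rw [ENNReal.coe_inv (by exact_mod_cast (by omega : n ≠ 0)), ENNReal.coe_natCast]

lemma nu_false : nuM n hn {false} = 1 - (n : ℝ≥0∞)⁻¹ := by
  rw [nuM, PMF.toMeasure_apply_singleton _ _ (measurableSet_singleton _)]
  simp [flipPMF, PMF.bernoulli]
  rw [ENNReal.coe_inv (by exact_mod_cast (by omega : n ≠ 0)), ENNReal.coe_natCast]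

instance : IsProbabilityMeasure (nuM n hn) := by rw [nuM]; infer_instance
instance : IsProbabilityMeasure (mu1 n hn) := by rw [mu1]; infer_instance

lemma cyl_meas (T : Finset (Fin n)) :
    mu1 n hn {ω : Fin n → Bool | ∀ i ∈ T, ω i = true} = (n : ℝ≥0∞)⁻¹ ^ T.card := by
  have hset : {ω : Fin n → Bool | ∀ i ∈ T, ω i = true}
      = Set.univ.pi (fun i => if i ∈ T then {true} else Set.univ) := by
    ext ω; simp only [Set.mem_setOf_eq, Set.mem_pi, Set.mem_univ, forall_true_left]
    constructor
    · intro h i; by_cases hi : i ∈ T <;> simp [hi, h i]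
    · intro h i hi; have := h i; simpa [hi] using this
  rw [mu1, hset, Measure.pi_pi]
  have : ∀ i : Fin n, nuM n hn (if i ∈ T then ({true} : Set Bool) else Set.univ)
      = if i ∈ T then (n : ℝ≥0∞)⁻¹ else 1 := by
    intro i; by_cases hi : i ∈ T
    · simp [hi, nu_true hn]
    · simp only [if_neg hi]; exact measure_univ
  simp_rw [this]
  rw [Finset.prod_ite_mem, Finset.univ_inter, Finset.prod_const]

lemma onesCount_xor_le (X ω : Fin n → Bool) :
    onesCount (fun i => xor (ω i) (X i)) ≤
      onesCount X + (univ.filter (fun i => X i = false ∧ ω i = true)).card := by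
  unfold onesCount
  refine le_trans (Finset.card_le_card ?_) (Finset.card_union_le _ _)
  intro i hi
  simp only [mem_filter, mem_univ, true_and, mem_union] at hi ⊢
  cases hX : X i <;> cases hw : ω i <;> simp_all

lemma tail_meas (X : Fin n → Bool) (k : ℕ) :
    mu1 n hn {ω : Fin n → Bool | k ≤ ((univ.filter (fun i => X i = false ∧ ω i = true)).card)}
      ≤ ((univ.filter (fun i => X i = false)).card.choose k) * (n : ℝ≥0∞)⁻¹ ^ k := by
  set Z := univ.filter (fun i => X i = false) with hZ
  have hsub : {ω : Fin n → Bool | k ≤ ((univ.filter (fun i => X i = false ∧ ω i = true)).card)}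
      ⊆ ⋃ T ∈ Z.powersetCard k, {ω : Fin n → Bool | ∀ i ∈ T, ω i = true} := by
    intro ω hω
    simp only [Set.mem_setOf_eq] at hω
    obtain ⟨T, hTsub, hTcard⟩ := Finset.exists_subset_card_eq hω
    have hTZ : T ⊆ Z := hTsub.trans (Finset.monotone_filter_right _ (fun i _ hi => hi.1))
    refine Set.mem_iUnion₂.mpr ⟨T, Finset.mem_powersetCard.mpr ⟨hTZ, hTcard⟩, ?_⟩
    intro i hi
    have := hTsub hi
    simp only [mem_filter] at this
    exact this.2.2
  refine le_trans (measure_mono hsub) (le_trans (measure_biUnion_finset_le _ _) ?_)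
  have heq : ∀ T ∈ Z.powersetCard k, mu1 n hn {ω : Fin n → Bool | ∀ i ∈ T, ω i = true}
      = (n : ℝ≥0∞)⁻¹ ^ k := by
    intro T hT
    rw [cyl_meas hn T, (Finset.mem_powersetCard.mp hT).2]
  rw [Finset.sum_congr rfl heq, Finset.sum_const, Finset.card_powersetCard, nsmul_eq_mul]

lemma point_meas (ω : Fin n → Bool) :
    mu1 n hn {ω} = ∏ i : Fin n, nuM n hn {ω i} := by
  rw [mu1, ← Set.univ_pi_singleton ω, Measure.pi_pi]

def delta (z : Fin n) : Fin n → Bool := fun i => decide (i = z)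

lemma delta_improves (X : Fin n → Bool) (z : Fin n) (hz : X z = false) :
    onesCount X < onesCount (fun i => xor (delta z i) (X i)) := by
  unfold onesCount
  have : univ.filter (fun i => xor (delta z i) (X i) = true)
      = insert z (univ.filter (fun i => X i = true)) := by
    ext i
    simp only [mem_filter, mem_univ, true_and, mem_insert, delta]
    by_cases hiz : i = z
    · subst hiz; simp [hz]
    · simp [hiz]
  rw [this, Finset.card_insert_of_notMem (by simp [hz])]
  omega

lemma point_meas_delta (z : Fin n) :
    mu1 n hn {delta z} = (n : ℝ≥0∞)⁻¹ * (1 - (n : ℝ≥0∞)⁻¹) ^ (n - 1) := by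
  rw [point_meas]
  rw [← Finset.mul_prod_erase univ _ (Finset.mem_univ z)]
  have h1 : nuM n hn {delta z z} = (n : ℝ≥0∞)⁻¹ := by
    simp only [delta, decide_eq_true_eq]; simp [nu_true hn]
  have h2 : ∀ i ∈ univ.erase z, nuM n hn {delta z i} = 1 - (n : ℝ≥0∞)⁻¹ := by
    intro i hi
    have : i ≠ z := (Finset.mem_erase.mp hi).1
    simp only [delta, this, decide_eq_true_eq]
    simp [this, nu_false hn]
  rw [h1, Finset.prod_congr rfl h2, Finset.prod_const, Finset.card_erase_of_mem (mem_univ z),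
    Finset.card_univ, Fintype.card_fin]

lemma improve_lower (X : Fin n → Bool) :
    ((univ.filter (fun i => X i = false)).card : ℝ≥0∞)
        * ((n : ℝ≥0∞)⁻¹ * (1 - (n : ℝ≥0∞)⁻¹) ^ (n - 1))
      ≤ mu1 n hn {ω : Fin n → Bool | onesCount X < onesCount (fun i => xor (ω i) (X i))} := by
  set Z := univ.filter (fun i => X i = false) with hZ
  have hsub : (⋃ z ∈ Z, {delta z}) ⊆
      {ω : Fin n → Bool | onesCount X < onesCount (fun i => xor (ω i) (X i))} := by
    intro ω hω
    simp only [Set.mem_iUnion, Set.mem_singleton_iff] at hω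
    obtain ⟨z, hz, rfl⟩ := hω
    have hXz : X z = false := by simpa [hZ] using (Finset.mem_filter.mp hz).2
    exact delta_improves X z hXz
  refine le_trans ?_ (measure_mono hsub)
  rw [measure_biUnion_finset ?_ (fun _ _ => (Set.finite_singleton _).measurableSet)]
  · have : ∀ z ∈ Z, mu1 n hn {delta z} = (n : ℝ≥0∞)⁻¹ * (1 - (n : ℝ≥0∞)⁻¹) ^ (n - 1) :=
      fun z _ => point_meas_delta hn z
    rw [Finset.sum_congr rfl this, Finset.sum_const, nsmul_eq_mul]
  · intro z hz z' hz' hne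
    rw [Function.onFun, Set.disjoint_singleton]
    intro h
    have := congrFun h z
    simp only [delta] at this
    rw [decide_eq_decide] at this
    exact hne (this.mp trivial)

lemma marginal_meas (lam : ℕ) (E : Set (Fin n → Bool)) (j : Fin lam) :
    Measure.pi (fun _ : Fin lam => mu1 n hn) {ω | ω j ∈ E} = mu1 n hn E := by
  have hset : {ω : Fin lam → Fin n → Bool | ω j ∈ E}
      = Set.univ.pi (fun j' => if j' = j then E else Set.univ) := by
    ext ω
    simp only [Set.mem_setOf_eq, Set.mem_pi, Set.mem_univ, forall_true_left]
    constructor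
    · intro h j'; by_cases hj : j' = j <;> simp [hj, h]
    · intro h; have := h j; simpa using this
  rw [hset, Measure.pi_pi]
  have : ∀ j' : Fin lam, mu1 n hn (if j' = j then E else Set.univ)
      = if j' = j then mu1 n hn E else 1 := by
    intro j'; by_cases hj : j' = j
    · simp [hj]
    · simp only [if_neg hj]; exact measure_univ
  simp_rw [this]
  simp

lemma full_meas (lam : ℕ) (E : Set (Fin n → Bool)) :
    Measure.pi (fun _ : Fin lam => mu1 n hn) {ω | ∀ j, ω j ∈ E} = (mu1 n hn E) ^ lam := by
  have hset : {ω : Fin lam → Fin n → Bool | ∀ j, ω j ∈ E} = Set.univ.pi (fun _ => E) := by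
    ext ω; simp [Set.mem_pi]
  rw [hset, Measure.pi_pi, Finset.prod_const, Finset.card_univ, Fintype.card_fin]

end Aux

/-! ### Real-analysis lemmas -/

lemma aux_pow_self_le (k : ℕ) : (k : ℝ) ^ k ≤ (k.factorial : ℝ) * Real.exp 1 ^ k := by
  induction k with
  | zero => simp
  | succ k ih =>
    rcases Nat.eq_zero_or_pos k with hk | hk
    · subst hk; simpa using Real.one_le_exp (by norm_num : (0:ℝ) ≤ 1)
    have hkpos : (0:ℝ) < k := by exact_mod_cast hk
    have h1 : ((k:ℝ) + 1) ^ k ≤ (k:ℝ) ^ k * Real.exp 1 := by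
      have heq : ((k:ℝ) + 1) = (k:ℝ) * (1 + 1/(k:ℝ)) := by field_simp
      rw [heq, mul_pow]
      refine mul_le_mul_of_nonneg_left ?_ (by positivity)
      have h2 : (1 + 1/(k:ℝ)) ≤ Real.exp (1/(k:ℝ)) := by
        have := Real.add_one_le_exp (1/(k:ℝ)); linarith
      calc (1 + 1/(k:ℝ)) ^ k ≤ Real.exp (1/(k:ℝ)) ^ k :=
            pow_le_pow_left₀ (by positivity) h2 k
        _ = Real.exp ((k:ℝ) * (1/(k:ℝ))) := by rw [← Real.exp_nat_mul]
        _ = Real.exp 1 := by rw [mul_one_div, div_self hkpos.ne']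
    have hstep : ((k:ℝ) + 1) ^ (k+1) ≤ ((k:ℝ)+1) * ((k:ℝ)^k * Real.exp 1) := by
      rw [pow_succ]
      nlinarith [pow_nonneg (by positivity : (0:ℝ) ≤ (k:ℝ)+1) k]
    calc ((k+1 : ℕ) : ℝ) ^ (k+1) = ((k:ℝ)+1) ^ (k+1) := by push_cast; ring_nf
      _ ≤ ((k:ℝ)+1) * ((k:ℝ)^k * Real.exp 1) := hstep
      _ ≤ ((k:ℝ)+1) * ((k.factorial : ℝ) * Real.exp 1 ^ k * Real.exp 1) := by
          refine mul_le_mul_of_nonneg_left ?_ (by positivity)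
          exact mul_le_mul_of_nonneg_right ih (Real.exp_pos 1).le
      _ = ((k+1).factorial : ℝ) * Real.exp 1 ^ (k+1) := by
          push_cast [Nat.factorial_succ]; ring

lemma aux_mono {c L t : ℝ} (hc : 0 < c) (hce : c ≤ Real.exp 1)
    (hL : Real.exp 1 ≤ L) (hLt : L ≤ t) :
    (c / t) ^ t ≤ (c / L) ^ L := by
  have hLpos : 0 < L := lt_of_lt_of_le (Real.exp_pos 1) hL
  have htpos : 0 < t := lt_of_lt_of_le hLpos hLt
  have hanti : AntitoneOn (fun s => s * Real.log c - s * Real.log s) (Set.Ici (Real.exp 1)) := by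
    refine (strictAntiOn_of_deriv_neg (convex_Ici _) ?_ ?_).antitoneOn
    · exact ((continuous_id.mul continuous_const).sub Real.continuous_mul_log).continuousOn
    · intro x hx
      rw [interior_Ici] at hx
      have hxpos : 0 < x := lt_trans (Real.exp_pos 1) hx
      have hd : HasDerivAt (fun s => s * Real.log c - s * Real.log s)
          (Real.log c - (Real.log x + 1)) x := by
        have := ((hasDerivAt_id x).mul_const (Real.log c)).sub
          (Real.hasDerivAt_mul_log hxpos.ne')
        simp at this; exact this
      rw [hd.deriv]
      have h1 : Real.log c ≤ 1 := by
        calc Real.log c ≤ Real.log (Real.exp 1) := Real.log_le_log hc hce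
          _ = 1 := Real.log_exp 1
      have h2 : 1 < Real.log x := by
        calc (1:ℝ) = Real.log (Real.exp 1) := (Real.log_exp 1).symm
          _ < Real.log x := Real.log_lt_log (Real.exp_pos 1) hx
      linarith
  have hg : t * Real.log c - t * Real.log t ≤ L * Real.log c - L * Real.log L :=
    hanti (Set.mem_Ici.mpr hL) (Set.mem_Ici.mpr (hL.trans hLt)) hLt
  have e1 : (c / t) ^ t = Real.exp (t * (Real.log c - Real.log t)) := by
    rw [Real.rpow_def_of_pos (div_pos hc htpos), Real.log_div hc.ne' htpos.ne', mul_comm]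
  have e2 : (c / L) ^ L = Real.exp (L * (Real.log c - Real.log L)) := by
    rw [Real.rpow_def_of_pos (div_pos hc hLpos), Real.log_div hc.ne' hLpos.ne', mul_comm]
  rw [e1, e2]
  exact Real.exp_le_exp.mpr (by ring_nf; ring_nf at hg; linarith)

lemma aux_lower {s : ℝ} (hs0 : 0 ≤ s) (hs1 : s ≤ 1) (m : ℕ) :
    (m : ℝ) * s / (1 + m * s) ≤ 1 - (1 - s) ^ m := by
  have h1 : (1 - s) ^ m ≤ Real.exp (-((m:ℝ) * s)) := by
    calc (1 - s) ^ m ≤ Real.exp (-s) ^ m := by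
          refine pow_le_pow_left₀ (by linarith) ?_ m
          have := Real.add_one_le_exp (-s); linarith
      _ = Real.exp (-((m:ℝ) * s)) := by
          rw [← Real.exp_nat_mul]; ring_nf
  have h2 : Real.exp (-((m:ℝ) * s)) ≤ 1 / (1 + m * s) := by
    rw [Real.exp_neg, one_div]
    have hpos : (0:ℝ) < 1 + m * s := by positivity
    refine inv_anti₀ hpos ?_
    have := Real.add_one_le_exp ((m:ℝ) * s); linarith
  have h3 : (1 - s) ^ m ≤ 1 / (1 + m * s) := h1.trans h2
  have h4 : (m:ℝ) * s / (1 + m * s) = 1 - 1 / (1 + m * s) := by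
    have hpos : (0:ℝ) < 1 + m * s := by positivity
    field_simp
    ring
  rw [h4]; linarith

lemma aux_en {n : ℕ} (hn : 1 ≤ n) :
    Real.exp (-1) ≤ (1 - 1/(n:ℝ)) ^ (n - 1) := by
  rcases eq_or_lt_of_le hn with h1 | h2
  · rw [← h1]
    norm_num
  · have hm : ((n - 1 : ℕ) : ℝ) = (n:ℝ) - 1 := by
      push_cast [Nat.cast_sub hn]; ring
    have hn1 : (1:ℝ) ≤ (n:ℝ) - 1 := by
      have : (2:ℝ) ≤ (n:ℝ) := by exact_mod_cast h2
      linarith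
    have hne : (n:ℝ) - 1 ≠ 0 := by linarith
    have hstep : Real.exp (-(1/((n:ℝ)-1))) ≤ 1 - 1/(n:ℝ) := by
      rw [Real.exp_neg]
      have hpos : (0:ℝ) < 1 + 1/((n:ℝ)-1) := by positivity
      have hexp : 1 + 1/((n:ℝ)-1) ≤ Real.exp (1/((n:ℝ)-1)) := by
        have := Real.add_one_le_exp (1/((n:ℝ)-1)); linarith
      have h5 : (Real.exp (1/((n:ℝ)-1)))⁻¹ ≤ (1 + 1/((n:ℝ)-1))⁻¹ :=
        inv_anti₀ hpos hexp
      refine h5.trans ?_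
      have heq : (1 + 1/((n:ℝ)-1))⁻¹ = 1 - 1/(n:ℝ) := by
        rw [inv_eq_one_div]
        have hnpos : (0:ℝ) < n := by positivity
        field_simp
        ring
      rw [heq]
    calc Real.exp (-1) = Real.exp (-(1/((n:ℝ)-1))) ^ (n-1 : ℕ) := by
          rw [← Real.exp_nat_mul, hm]
          congr 1
          field_simp
      _ ≤ (1 - 1/(n:ℝ)) ^ (n-1 : ℕ) :=
          pow_le_pow_left₀ (Real.exp_nonneg _) hstep _
set_option maxHeartbeats 2000000 in
theorem stmt_5 (n a lam : ℕ) (hn : 1 ≤ n) (ha : 1 ≤ a) (han : a ≤ n) (hlam : 1 ≤ lam)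
    (hlamE : Real.exp (Real.exp 1) ≤ (lam : ℝ))
    (X : Fin n → Bool) (hX : (Finset.univ.filter (fun i => X i = false)).card = a) :
    (ProbabilityTheory.cond (mutationsMeasure n lam hn)
        {ω | onesCount X < bestOnes X ω})
      {ω | onesCount X + ⌈Real.log lam⌉₊ ≤ bestOnes X ω}
      ≤ ENNReal.ofReal
          ((lam : ℝ) * ((n : ℝ) * Real.exp 1 + (a : ℝ) * (lam : ℝ))
            * (a : ℝ) ^ (Real.log lam - 1) / ((n : ℝ) * Real.log lam) ^ (Real.log lam)) := by
  classical
  have hμpi : mutationsMeasure n lam hn = Measure.pi (fun _ : Fin lam => mu1 n hn) := rfl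
  set μ := mutationsMeasure n lam hn with hμ
  haveI : IsProbabilityMeasure μ := by rw [hμpi]; infer_instance
  set L := Real.log lam with hLdef
  set k := ⌈L⌉₊ with hkdef
  have hlam0 : (0:ℝ) < lam := by exact_mod_cast hlam
  have hn0 : (0:ℝ) < n := by exact_mod_cast hn
  have ha0 : (0:ℝ) < a := by exact_mod_cast ha
  have han' : (a:ℝ) ≤ (n:ℝ) := by exact_mod_cast han
  have hLe : Real.exp 1 ≤ L := (Real.le_log_iff_exp_le hlam0).mpr hlamE
  have hLpos : 0 < L := lt_of_lt_of_le (Real.exp_pos 1) hLe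
  have hk1 : 1 ≤ k := Nat.one_le_ceil_iff.mpr hLpos
  have hLk : L ≤ (k:ℝ) := Nat.le_ceil L
  have hkpos : (0:ℝ) < k := lt_of_lt_of_le hLpos hLk
  set E0 : Set (Fin n → Bool) :=
    {ω | onesCount X < onesCount (fun i => xor (ω i) (X i))} with hE0
  set Ek : Set (Fin n → Bool) :=
    {ω | onesCount X + k ≤ onesCount (fun i => xor (ω i) (X i))} with hEk
  set B : Set (Fin lam → Fin n → Bool) := {ω | onesCount X < bestOnes X ω} with hB
  set A : Set (Fin lam → Fin n → Bool) := {ω | onesCount X + k ≤ bestOnes X ω} with hA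
  have hAB : A ⊆ B := by
    intro ω hω
    have h1 : onesCount X + k ≤ bestOnes X ω := hω
    have : onesCount X < bestOnes X ω := by omega
    exact this
  -- upper bound for μ A
  have hμA : μ A ≤ (lam : ℝ≥0∞) * ((a.choose k : ℝ≥0∞) * (n:ℝ≥0∞)⁻¹ ^ k) := by
    have hAsub : A ⊆ ⋃ j ∈ Finset.univ, {ω : Fin lam → Fin n → Bool | ω j ∈ Ek} := by
      intro ω hω
      have h1 : onesCount X + k ≤ bestOnes X ω := hω
      rw [bestOnes] at h1
      obtain ⟨j, _, hj⟩ := (Finset.le_sup_iff (by simp only [bot_eq_zero]; omega : (⊥:ℕ) < onesCount X + k)).mp h1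
      exact Set.mem_biUnion (Finset.mem_univ j) hj
    refine le_trans (measure_mono hAsub) (le_trans (measure_biUnion_finset_le _ _) ?_)
    have hone : ∀ j ∈ Finset.univ, μ {ω : Fin lam → Fin n → Bool | ω j ∈ Ek}
        ≤ (a.choose k : ℝ≥0∞) * (n:ℝ≥0∞)⁻¹ ^ k := by
      intro j _
      rw [hμpi, marginal_meas hn lam Ek j]
      refine le_trans (measure_mono ?_) (le_of_le_of_eq (tail_meas hn X k) (by rw [hX]))
      intro ω hω
      have h2 := onesCount_xor_le X ω
      have h3 : onesCount X + k ≤ onesCount (fun i => xor (ω i) (X i)) := hω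
      simp only [Set.mem_setOf_eq]
      omega
    refine le_trans (Finset.sum_le_sum hone) ?_
    rw [Finset.sum_const, Finset.card_univ, Fintype.card_fin, nsmul_eq_mul]
  -- lower bound for μ B
  have hBc : Bᶜ = {ω : Fin lam → Fin n → Bool | ∀ j, ω j ∈ E0ᶜ} := by
    ext ω
    constructor
    · intro hω j
      intro hlt
      exact hω (by
        show onesCount X < bestOnes X ω
        rw [bestOnes]
        exact Finset.lt_sup_iff.mpr ⟨j, Finset.mem_univ j, hlt⟩)
    · intro hω hB'
      have h1 : onesCount X < bestOnes X ω := hB'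
      rw [bestOnes] at h1
      obtain ⟨j, _, hj⟩ := Finset.lt_sup_iff.mp h1
      exact (hω j) hj
  have hμBc : μ Bᶜ = (mu1 n hn E0ᶜ) ^ lam := by
    rw [hμpi, hBc, full_meas hn lam]
  have hμB : μ B = 1 - (mu1 n hn E0ᶜ) ^ lam := by
    have h := prob_compl_eq_one_sub (μ := μ) (Set.toFinite Bᶜ).measurableSet
    rw [compl_compl] at h
    rw [h, hμBc]
  -- real versions
  set pa := (μ A).toReal with hpa
  set pb := (μ B).toReal with hpb
  set p0 := (mu1 n hn E0).toReal with hp0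
  have hp0le1 : p0 ≤ 1 := by
    rw [hp0]
    exact ENNReal.toReal_mono ENNReal.one_ne_top prob_le_one
  have hp0nonneg : 0 ≤ p0 := ENNReal.toReal_nonneg
  have hq0 : (mu1 n hn E0ᶜ).toReal = 1 - p0 := by
    rw [prob_compl_eq_one_sub (Set.toFinite E0).measurableSet,
      ENNReal.toReal_sub_of_le prob_le_one ENNReal.one_ne_top, ENNReal.toReal_one, hp0]
  have hpb_eq : pb = 1 - (1 - p0) ^ lam := by
    rw [hpb, hμB, ENNReal.toReal_sub_of_le (by
        exact pow_le_one' prob_le_one lam) ENNReal.one_ne_top,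
      ENNReal.toReal_one, ENNReal.toReal_pow, hq0]
  -- pa upper bound (real)
  have hninv_ne_top : ((n:ℝ≥0∞))⁻¹ ≠ ⊤ :=
    ENNReal.inv_ne_top.mpr (Nat.cast_ne_zero.mpr (by omega))
  have hpa_le : pa ≤ (lam:ℝ) * (a.choose k : ℝ) * ((n:ℝ)⁻¹) ^ k := by
    rw [hpa]
    have hfin : (lam : ℝ≥0∞) * ((a.choose k : ℝ≥0∞) * (n:ℝ≥0∞)⁻¹ ^ k) ≠ ⊤ := by
      apply ENNReal.mul_ne_top (ENNReal.natCast_ne_top lam)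
      exact ENNReal.mul_ne_top (ENNReal.natCast_ne_top _) (ENNReal.pow_ne_top hninv_ne_top)
    refine le_trans (ENNReal.toReal_mono hfin hμA) ?_
    rw [ENNReal.toReal_mul, ENNReal.toReal_mul, ENNReal.toReal_pow, ENNReal.toReal_inv]
    simp [mul_assoc]
  -- p0 lower bound (real)
  have hp0_ge : (a:ℝ) * ((n:ℝ)⁻¹ * (1 - (n:ℝ)⁻¹) ^ (n-1)) ≤ p0 := by
    have h1 := improve_lower hn X
    rw [hX] at h1
    have h2 := ENNReal.toReal_mono (measure_ne_top _ _) h1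
    rw [hp0]
    refine le_trans (le_of_eq ?_) h2
    rw [ENNReal.toReal_mul, ENNReal.toReal_mul, ENNReal.toReal_pow, ENNReal.toReal_inv,
      ENNReal.toReal_sub_of_le (ENNReal.inv_le_one.mpr (by exact_mod_cast hn))
        ENNReal.one_ne_top, ENNReal.toReal_inv]
    simp
  -- combine to s
  set sP := (a:ℝ) / (Real.exp 1 * n) with hs
  have hs0 : 0 ≤ sP := by positivity
  have hs1 : sP ≤ 1 := by
    rw [hs, div_le_one (by positivity)]
    nlinarith [Real.add_one_le_exp (1:ℝ)]
  have hsp0 : sP ≤ p0 := by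
    refine le_trans ?_ hp0_ge
    have hen := aux_en hn
    have hmul : (a:ℝ) * ((n:ℝ)⁻¹ * Real.exp (-1))
        ≤ (a:ℝ) * ((n:ℝ)⁻¹ * (1 - (n:ℝ)⁻¹) ^ (n-1)) := by
      have hinv : (0:ℝ) ≤ (n:ℝ)⁻¹ := by positivity
      have h1 : (n:ℝ)⁻¹ * Real.exp (-1) ≤ (n:ℝ)⁻¹ * (1 - (n:ℝ)⁻¹) ^ (n-1) := by
        simp only [one_div] at hen
        exact mul_le_mul_of_nonneg_left (by simpa using hen) hinv
      exact mul_le_mul_of_nonneg_left h1 ha0.le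
    refine le_trans (le_of_eq ?_) hmul
    rw [Real.exp_neg, hs]
    rw [div_eq_mul_inv, mul_inv]
    ring
  have hpb_ge : (a:ℝ) * lam / ((n:ℝ) * Real.exp 1 + a * lam) ≤ pb := by
    have h1 : (1 - p0)^lam ≤ (1 - sP)^lam := pow_le_pow_left₀ (by linarith) (by linarith) lam
    have h2 := aux_lower hs0 hs1 lam
    have heq : (lam:ℝ) * sP / (1 + lam * sP) = (a:ℝ) * lam / ((n:ℝ) * Real.exp 1 + a * lam) := by
      rw [hs]
      rw [div_eq_div_iff (by positivity)
        (ne_of_gt (by positivity : (0:ℝ) < (n:ℝ) * Real.exp 1 + (a:ℝ) * (lam:ℝ)))]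
      field_simp
    rw [heq] at h2
    rw [hpb_eq]
    linarith
  have hpbpos : 0 < pb := lt_of_lt_of_le (by positivity) hpb_ge
  -- conditional probability as a ratio
  have hcond : ProbabilityTheory.cond μ B A = μ A / μ B := by
    rw [ProbabilityTheory.cond_apply (Set.toFinite B).measurableSet,
      Set.inter_eq_self_of_subset_right hAB, div_eq_mul_inv, mul_comm]
  rw [hcond]
  have hdiveq : μ A / μ B = ENNReal.ofReal (pa / pb) := by
    rw [ENNReal.ofReal_div_of_pos hpbpos, hpa, hpb,
      ENNReal.ofReal_toReal (measure_ne_top μ A), ENNReal.ofReal_toReal (measure_ne_top μ B)]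
  rw [hdiveq]
  refine ENNReal.ofReal_le_ofReal ?_
  -- the purely real final estimate
  set c := Real.exp 1 * a / n with hc
  have hcpos : 0 < c := by positivity
  have hce : c ≤ Real.exp 1 := by
    rw [hc, div_le_iff₀ hn0]
    nlinarith [Real.exp_pos 1]
  have hkfacpos : (0:ℝ) < k.factorial := by exact_mod_cast k.factorial_pos
  have h1 : (a.choose k : ℝ) ≤ (a:ℝ)^k * Real.exp 1 ^ k / (k:ℝ)^k := by
    refine (Nat.choose_le_pow_div k a).trans ?_
    rw [div_le_div_iff₀ hkfacpos (by positivity)]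
    calc (a:ℝ)^k * (k:ℝ)^k ≤ (a:ℝ)^k * ((k.factorial:ℝ) * Real.exp 1^k) :=
          mul_le_mul_of_nonneg_left (aux_pow_self_le k) (by positivity)
      _ = (a:ℝ)^k * Real.exp 1^k * (k.factorial:ℝ) := by ring
  have hUA1 : (lam:ℝ) * (a.choose k) * ((n:ℝ)⁻¹)^k ≤ (lam:ℝ) * ((c/(k:ℝ))^(k:ℕ)) := by
    calc (lam:ℝ) * (a.choose k) * ((n:ℝ)⁻¹)^k
        ≤ (lam:ℝ) * ((a:ℝ)^k * Real.exp 1^k/(k:ℝ)^k) * ((n:ℝ)⁻¹)^k := by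
          exact mul_le_mul_of_nonneg_right
            (mul_le_mul_of_nonneg_left h1 (by positivity)) (by positivity)
      _ = (lam:ℝ) * ((c/(k:ℝ))^(k:ℕ)) := by
          rw [hc, div_pow, div_pow, mul_pow]
          field_simp
          ring_nf
          rw [← mul_pow, mul_inv_cancel₀ hn0.ne', one_pow]
  have hmono := aux_mono hcpos hce hLe hLk
  have hCL : (c/L) ^ L = (lam:ℝ) * ((a:ℝ) ^ L) / (((n:ℝ)*L) ^ L) := by
    rw [hc, div_div, Real.div_rpow (by positivity) (by positivity),
      Real.mul_rpow (Real.exp_pos 1).le ha0.le, Real.exp_one_rpow, hLdef,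
      Real.exp_log hlam0]
  set P := ((n:ℝ)*L) ^ L with hP
  have hPpos : 0 < P := Real.rpow_pos_of_pos (by positivity) _
  have hUA : pa ≤ (lam:ℝ) * ((lam:ℝ) * (a:ℝ) ^ L / P) := by
    refine hpa_le.trans (hUA1.trans ?_)
    refine mul_le_mul_of_nonneg_left ?_ (by positivity)
    calc ((c/(k:ℝ))^(k:ℕ) : ℝ) = (c/(k:ℝ)) ^ ((k:ℕ):ℝ) := (Real.rpow_natCast _ k).symm
      _ ≤ (c/L) ^ L := hmono
      _ = (lam:ℝ) * ((a:ℝ) ^ L) / P := hCL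
  have hfinal : pa / pb
      ≤ (lam:ℝ) * ((lam:ℝ) * (a:ℝ) ^ L / P) / ((a:ℝ)*lam/((n:ℝ)*Real.exp 1 + a*lam)) :=
    div_le_div₀ (by positivity) hUA (by positivity) hpb_ge
  refine hfinal.trans (le_of_eq ?_)
  have haL : (a:ℝ) ^ (L-1) = (a:ℝ) ^ L / a := by
    rw [Real.rpow_sub ha0, Real.rpow_one]
  rw [haL]
  have hapow : (0:ℝ) < (a:ℝ) ^ L := Real.rpow_pos_of_pos ha0 _
  have hden : (0:ℝ) < (n:ℝ)*Real.exp 1 + a*lam := by positivity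
  field_simp
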